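/- arXiv:1412.4193 — 2 statements merged into one kernel-verified Lean document; each statement's English description precedes it below -/
import Mathlib

section
/- Let δ > 0, B > 0, let H_N be an N×N real symmetric matrix with ‖H_N‖ ≤ B, and let θ be a real number with 0 < |θ| ≤ B. Suppose z_θ is a real number with m_N(z_θ) = 1/θ and either z_θ ≥ λ_1(H_N) + 2δ or z_θ ≤ λ_N(H_N) − 2δ. Then for every real ξ with |ξ| ≤ δ, one has |ξ|/(4B²) ≤ |m_N(z_θ + ξ) − 1/θ| ≤ 4|ξ|/δ². -/
open MeasureTheory Matrix Filter

/-- Operator norm (ℓ²→ℓ²) of a real matrix. -/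
noncomputable def opNorm {m n : ℕ} (A : Matrix (Fin m) (Fin n) ℝ) : ℝ :=
  ‖LinearMap.toContinuousLinearMap (Matrix.toEuclideanLin A)‖

/-- The eigenvalues of a Hermitian matrix, listed in decreasing order (with multiplicity);
junk value `0` if the matrix is not Hermitian. -/
noncomputable def eigDesc {𝕜 : Type*} [RCLike 𝕜] {N : ℕ} (A : Matrix (Fin N) (Fin N) 𝕜) :
    Fin N → ℝ :=
  if h : A.IsHermitian then fun k => h.eigenvalues (Tuple.sort h.eigenvalues k.rev) else 0

lemma key_lemma (N : ℕ) (hN : 1 ≤ N) (a : Fin N → ℝ) (δ B : ℝ) (hδ : 0 < δ) (hB : 0 < B)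
    (ha : ∀ k, 2 * δ ≤ a k) (ξ : ℝ) (hξ : |ξ| ≤ δ)
    (hsum : 1 / B ≤ (1 / (N : ℝ)) * ∑ k, 1 / a k) :
    |ξ| / (4 * B ^ 2) ≤
      |(1 / (N : ℝ)) * (∑ k, 1 / (a k + ξ)) - (1 / (N : ℝ)) * ∑ k, 1 / a k| ∧
    |(1 / (N : ℝ)) * (∑ k, 1 / (a k + ξ)) - (1 / (N : ℝ)) * ∑ k, 1 / a k| ≤ 4 * |ξ| / δ ^ 2 := by
  have hNpos : (0 : ℝ) < N := by exact_mod_cast hN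
  have hNne : (N : ℝ) ≠ 0 := hNpos.ne'
  have hak : ∀ k, 0 < a k := fun k => lt_of_lt_of_le (by linarith) (ha k)
  have hakξ : ∀ k, δ ≤ a k + ξ := by
    intro k
    have := abs_le.mp hξ
    have := ha k
    linarith
  have hakξpos : ∀ k, 0 < a k + ξ := fun k => lt_of_lt_of_le hδ (hakξ k)
  set S : ℝ := (1 / (N : ℝ)) * ∑ k, 1 / ((a k + ξ) * a k) with hS
  have hdiff : (1 / (N : ℝ)) * (∑ k, 1 / (a k + ξ)) - (1 / (N : ℝ)) * ∑ k, 1 / a k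
      = -ξ * S := by
    have hterm : ∀ k : Fin N, 1 / (a k + ξ) - 1 / a k = -ξ * (1 / ((a k + ξ) * a k)) := by
      intro k
      have h1 := (hak k).ne'
      have h2 := (hakξpos k).ne'
      field_simp
      ring
    calc (1 / (N : ℝ)) * (∑ k, 1 / (a k + ξ)) - (1 / (N : ℝ)) * ∑ k, 1 / a k
        = (1 / (N : ℝ)) * ∑ k, (1 / (a k + ξ) - 1 / a k) := by
          rw [← mul_sub, ← Finset.sum_sub_distrib]
      _ = (1 / (N : ℝ)) * ∑ k, -ξ * (1 / ((a k + ξ) * a k)) := by simp only [hterm]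
      _ = -ξ * S := by
          rw [hS, ← Finset.mul_sum]
          ring
  have hSpos : 0 ≤ S := by
    apply mul_nonneg (by positivity)
    apply Finset.sum_nonneg
    intro k _
    have h1 := hak k
    have h2 := hakξpos k
    positivity
  have habs : |(1 / (N : ℝ)) * (∑ k, 1 / (a k + ξ)) - (1 / (N : ℝ)) * ∑ k, 1 / a k|
      = |ξ| * S := by
    rw [hdiff, abs_mul, abs_neg, abs_of_nonneg hSpos]
  constructor
  · rw [habs]
    have hSterm : ∀ k, (2 / 3) * (1 / a k) ^ 2 ≤ 1 / ((a k + ξ) * a k) := by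
      intro k
      have h1 := hak k
      have h2 := hakξpos k
      have h3 : a k + ξ ≤ (3 / 2) * a k := by
        have := abs_le.mp hξ
        have := ha k
        linarith
      have h4 : (a k + ξ) * a k ≤ (3 / 2) * (a k ^ 2) := by nlinarith
      have h5 : (2 / 3) * (1 / a k) ^ 2 = 1 / ((3 / 2) * a k ^ 2) := by
        field_simp
      rw [h5]
      apply one_div_le_one_div_of_le (by positivity) h4
    have hCS : ((1 / (N : ℝ)) * ∑ k, 1 / a k) ^ 2 ≤ (1 / (N : ℝ)) * ∑ k, (1 / a k) ^ 2 := by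
      have h := sq_sum_le_card_mul_sum_sq (s := (Finset.univ : Finset (Fin N)))
        (f := fun k => 1 / a k)
      simp only [Finset.card_univ, Fintype.card_fin] at h
      have h' : ((1 : ℝ) / N) ^ 2 * (∑ k, 1 / a k) ^ 2
          ≤ ((1 : ℝ) / N) ^ 2 * ((N : ℝ) * ∑ k, (1 / a k) ^ 2) := by
        apply mul_le_mul_of_nonneg_left _ (by positivity)
        exact_mod_cast h
      have he : ((1 : ℝ) / N) ^ 2 * ((N : ℝ) * ∑ k, (1 / a k) ^ 2)
          = (1 / (N : ℝ)) * ∑ k, (1 / a k) ^ 2 := by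
        field_simp
      rw [mul_pow]
      rw [he] at h'
      exact h'
    have hSlow : (2 / 3) / B ^ 2 ≤ S := by
      have h2 : (2 / 3) * ((1 / (N : ℝ)) * ∑ k, (1 / a k) ^ 2) ≤ S := by
        rw [hS]
        have he : (2 / 3 : ℝ) * ((1 / (N : ℝ)) * ∑ k, (1 / a k) ^ 2)
            = (1 / (N : ℝ)) * ∑ k, (2 / 3) * (1 / a k) ^ 2 := by
          simp only [Finset.mul_sum]
          exact Finset.sum_congr rfl fun k _ => by ring
        rw [he]
        apply mul_le_mul_of_nonneg_left _ (by positivity)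
        exact Finset.sum_le_sum fun k _ => hSterm k
      have h1 : (1 / B) ^ 2 ≤ ((1 / (N : ℝ)) * ∑ k, 1 / a k) ^ 2 :=
        pow_le_pow_left₀ (by positivity) hsum 2
      have he2 : (2 / 3 : ℝ) / B ^ 2 = (2 / 3) * (1 / B) ^ 2 := by
        field_simp
      rw [he2]
      calc (2 / 3 : ℝ) * (1 / B) ^ 2
          ≤ (2 / 3) * ((1 / (N : ℝ)) * ∑ k, 1 / a k) ^ 2 :=
            mul_le_mul_of_nonneg_left h1 (by norm_num)
        _ ≤ (2 / 3) * ((1 / (N : ℝ)) * ∑ k, (1 / a k) ^ 2) :=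
            mul_le_mul_of_nonneg_left hCS (by norm_num)
        _ ≤ S := h2
    have hstep : |ξ| / (4 * B ^ 2) ≤ |ξ| * ((2 / 3) / B ^ 2) := by
      rw [div_le_iff₀ (by positivity)]
      have he : |ξ| * (2 / 3 / B ^ 2) * (4 * B ^ 2) = |ξ| * (8 / 3) := by
        field_simp
        ring
      rw [he]
      have := abs_nonneg ξ
      linarith
    exact hstep.trans (mul_le_mul_of_nonneg_left hSlow (abs_nonneg _))
  · rw [habs]
    have hSup : S ≤ 1 / (2 * δ ^ 2) := by
      rw [hS]
      have hterm : ∀ k, 1 / ((a k + ξ) * a k) ≤ 1 / (2 * δ ^ 2) := by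
        intro k
        apply one_div_le_one_div_of_le (by positivity)
        have h1 := hakξ k
        have h2 := ha k
        nlinarith
      calc (1 / (N : ℝ)) * ∑ k, 1 / ((a k + ξ) * a k)
          ≤ (1 / (N : ℝ)) * ∑ _k : Fin N, 1 / (2 * δ ^ 2) := by
            apply mul_le_mul_of_nonneg_left _ (by positivity)
            exact Finset.sum_le_sum fun k _ => hterm k
        _ = 1 / (2 * δ ^ 2) := by
            rw [Finset.sum_const, Finset.card_univ, Fintype.card_fin, nsmul_eq_mul]
            field_simp
    calc |ξ| * S ≤ |ξ| * (1 / (2 * δ ^ 2)) :=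
          mul_le_mul_of_nonneg_left hSup (abs_nonneg _)
      _ ≤ 4 * |ξ| / δ ^ 2 := by
          rw [mul_one_div, div_le_div_iff₀ (by positivity) (by positivity)]
          have := abs_nonneg ξ
          nlinarith

theorem stmt14 (δ B : ℝ) (hδ : 0 < δ) (hB : 0 < B) (N : ℕ) (hN : 1 ≤ N)
    (H : Matrix (Fin N) (Fin N) ℝ) (hH : H.IsHermitian) (hHnorm : opNorm H ≤ B)
    (θ : ℝ) (hθ0 : θ ≠ 0) (hθB : |θ| ≤ B)
    (z : ℝ) (hz : (1 / (N : ℝ)) * ∑ k, 1 / (z - eigDesc H k) = 1 / θ)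
    (hsep : eigDesc H ⟨0, by omega⟩ + 2 * δ ≤ z ∨ z ≤ eigDesc H ⟨N - 1, by omega⟩ - 2 * δ)
    (ξ : ℝ) (hξ : |ξ| ≤ δ) :
    |ξ| / (4 * B ^ 2) ≤ |(1 / (N : ℝ)) * (∑ k, 1 / (z + ξ - eigDesc H k)) - 1 / θ| ∧
    |(1 / (N : ℝ)) * (∑ k, 1 / (z + ξ - eigDesc H k)) - 1 / θ| ≤ 4 * |ξ| / δ ^ 2 := by
  have hNpos : (0 : ℝ) < N := by exact_mod_cast hN
  haveI : NeZero N := ⟨by omega⟩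
  have hanti : ∀ j k : Fin N, j ≤ k → eigDesc H k ≤ eigDesc H j := by
    intro j k hjk
    simp only [eigDesc, dif_pos hH]
    exact Tuple.monotone_sort hH.eigenvalues (Fin.rev_le_rev.mpr hjk)
  rcases hsep with h1 | h2
  · -- z ≥ λ_max + 2δ
    have ha : ∀ k, 2 * δ ≤ z - eigDesc H k := by
      intro k
      have := hanti ⟨0, by omega⟩ k (Fin.mk_le_of_le_val (Nat.zero_le _))
      linarith
    have hθpos : 0 < θ := by
      by_contra hc
      push_neg at hc
      have hsumpos : 0 < (1 / (N : ℝ)) * ∑ k, 1 / (z - eigDesc H k) := by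
        apply mul_pos (by positivity)
        apply Finset.sum_pos _ Finset.univ_nonempty
        intro k _
        exact one_div_pos.mpr (by have := ha k; linarith)
      rw [hz] at hsumpos
      have : 1 / θ ≤ 0 := div_nonpos_of_nonneg_of_nonpos (by norm_num) hc
      linarith
    have hsum : 1 / B ≤ (1 / (N : ℝ)) * ∑ k, 1 / (z - eigDesc H k) := by
      rw [hz]
      apply one_div_le_one_div_of_le hθpos
      calc θ = |θ| := (abs_of_pos hθpos).symm
        _ ≤ B := hθB
    have key := key_lemma N hN (fun k => z - eigDesc H k) δ B hδ hB ha ξ hξ hsum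
    have heq : ∀ k : Fin N, z + ξ - eigDesc H k = (z - eigDesc H k) + ξ := fun k => by ring
    simp only [heq]
    rw [← hz]
    exact key
  · -- z ≤ λ_min − 2δ
    have ha : ∀ k, 2 * δ ≤ eigDesc H k - z := by
      intro k
      have hk : k ≤ (⟨N - 1, by omega⟩ : Fin N) := by
        rw [Fin.le_def]
        have := k.isLt
        simp only
        omega
      have := hanti k ⟨N - 1, by omega⟩ hk
      linarith
    have hswap : ∀ x : ℝ, 1 / (z - x) = -(1 / (x - z)) := by
      intro x
      rw [← neg_sub x z, one_div_neg_eq_neg_one_div]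
    have hflip : (1 / (N : ℝ)) * ∑ k, 1 / (z - eigDesc H k)
        = -((1 / (N : ℝ)) * ∑ k, 1 / (eigDesc H k - z)) := by
      simp only [hswap]
      rw [Finset.sum_neg_distrib]
      ring
    have hsumpos : 0 < (1 / (N : ℝ)) * ∑ k, 1 / (eigDesc H k - z) := by
      apply mul_pos (by positivity)
      apply Finset.sum_pos _ Finset.univ_nonempty
      intro k _
      exact one_div_pos.mpr (by have := ha k; linarith)
    have hθneg : θ < 0 := by
      by_contra hc
      push_neg at hc
      have hθpos : 0 < θ := lt_of_le_of_ne hc (Ne.symm hθ0)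
      have hlt : 1 / θ < 0 := by
        rw [← hz, hflip]
        linarith
      have : 0 < 1 / θ := by positivity
      linarith
    have hval : (1 / (N : ℝ)) * ∑ k, 1 / (eigDesc H k - z) = -(1 / θ) := by
      have := hflip
      rw [hz] at this
      linarith
    have hsum : 1 / B ≤ (1 / (N : ℝ)) * ∑ k, 1 / (eigDesc H k - z) := by
      rw [hval, ← one_div_neg_eq_neg_one_div]
      apply one_div_le_one_div_of_le (by linarith)
      have := abs_of_neg hθneg
      linarith
    have hξ' : |(-ξ)| ≤ δ := by rwa [abs_neg]
    have key := key_lemma N hN (fun k => eigDesc H k - z) δ B hδ hB ha (-ξ) hξ' hsum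
    rw [abs_neg] at key
    have heq : (1 / (N : ℝ)) * (∑ k, 1 / (z + ξ - eigDesc H k)) - 1 / θ
        = -((1 / (N : ℝ)) * (∑ k, 1 / ((eigDesc H k - z) + (-ξ)))
            - (1 / (N : ℝ)) * ∑ k, 1 / (eigDesc H k - z)) := by
      rw [hval]
      have hs : ∀ k : Fin N, (1 : ℝ) / (z + ξ - eigDesc H k)
          = -(1 / ((eigDesc H k - z) + (-ξ))) := by
        intro k
        rw [← one_div_neg_eq_neg_one_div]
        ring_nf
      simp only [hs]
      rw [Finset.sum_neg_distrib]
      ring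
    rw [heq, abs_neg]
    exact key
end

section
/- Let 1 ≤ M ≤ N be integers, let H be an N×N real symmetric matrix, let Ũ be an N×M real matrix with orthonormal columns (ŨᵀŨ = I_M), and let z, z' be real numbers with λ_1(H) < z' < z. Then the M×M real symmetric matrix Ũᵀ( (z'I_N − H)^{−1} − (zI_N − H)^{−1} )Ũ, which equals (z − z') Ũᵀ (z'I_N − H)^{−1} (zI_N − H)^{−1} Ũ, is positive definite. Consequently, for any invertible M×M real diagonal matrix P̃_M, each ordered eigenvalue of D(z) = P̃_M^{−1} − Ũᵀ(zI_N − H)^{−1}Ũ is a strictly increasing function of z on (λ_1(H), ∞). -/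
open MeasureTheory Matrix Filter

open Module Submodule
open scoped RealInnerProductSpace

section Helper

variable {m : ℕ}

lemma inner_map_eq_sum (b : OrthonormalBasis (Fin m) ℝ (EuclideanSpace ℝ (Fin m)))
    (T : EuclideanSpace ℝ (Fin m) →ₗ[ℝ] EuclideanSpace ℝ (Fin m)) (μ : Fin m → ℝ)
    (hT : ∀ i, T (b i) = μ i • b i) (x : EuclideanSpace ℝ (Fin m)) :
    ⟪x, T x⟫ = ∑ i, μ i * ⟪b i, x⟫ ^ 2 := by
  have hTx : T x = ∑ i, ⟪b i, x⟫ • (μ i • b i) := by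
    nth_rewrite 1 [← b.sum_repr' x]
    rw [map_sum]
    simp_rw [_root_.map_smul, hT]
  rw [hTx, inner_sum]
  refine Finset.sum_congr rfl fun i _ => ?_
  rw [real_inner_smul_right, real_inner_smul_right, real_inner_comm]
  ring

lemma inner_self_eq_sum (b : OrthonormalBasis (Fin m) ℝ (EuclideanSpace ℝ (Fin m)))
    (x : EuclideanSpace ℝ (Fin m)) :
    ⟪x, x⟫ = ∑ i, ⟪b i, x⟫ ^ 2 := by
  simpa using inner_map_eq_sum b LinearMap.id (fun _ => 1) (by simp) x

lemma inner_basis_eq_zero (b : OrthonormalBasis (Fin m) ℝ (EuclideanSpace ℝ (Fin m)))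
    {s : Set (Fin m)} {x : EuclideanSpace ℝ (Fin m)}
    (hx : x ∈ Submodule.span ℝ (b '' s)) {i : Fin m} (hi : i ∉ s) : ⟪b i, x⟫ = 0 := by
  induction hx using Submodule.span_induction with
  | mem y hy =>
    obtain ⟨j, hj, rfl⟩ := hy
    exact b.orthonormal.2 (fun h => hi (h ▸ hj))
  | zero => simp
  | add y z _ _ hy hz => rw [inner_add_right, hy, hz, add_zero]
  | smul c y _ hy => rw [real_inner_smul_right, hy, mul_zero]

lemma rayleigh_le (b : OrthonormalBasis (Fin m) ℝ (EuclideanSpace ℝ (Fin m)))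
    (T : EuclideanSpace ℝ (Fin m) →ₗ[ℝ] EuclideanSpace ℝ (Fin m)) (μ : Fin m → ℝ)
    (hT : ∀ i, T (b i) = μ i • b i) {s : Set (Fin m)} {μ0 : ℝ}
    (hs : ∀ i ∈ s, μ i ≤ μ0) {x : EuclideanSpace ℝ (Fin m)}
    (hx : x ∈ Submodule.span ℝ (b '' s)) : ⟪x, T x⟫ ≤ μ0 * ⟪x, x⟫ := by
  rw [inner_map_eq_sum b T μ hT, inner_self_eq_sum b, Finset.mul_sum]
  refine Finset.sum_le_sum fun i _ => ?_
  by_cases h : i ∈ s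
  · exact mul_le_mul_of_nonneg_right (hs i h) (sq_nonneg _)
  · rw [inner_basis_eq_zero b hx h]
    simp

lemma rayleigh_ge (b : OrthonormalBasis (Fin m) ℝ (EuclideanSpace ℝ (Fin m)))
    (T : EuclideanSpace ℝ (Fin m) →ₗ[ℝ] EuclideanSpace ℝ (Fin m)) (μ : Fin m → ℝ)
    (hT : ∀ i, T (b i) = μ i • b i) {s : Set (Fin m)} {μ0 : ℝ}
    (hs : ∀ i ∈ s, μ0 ≤ μ i) {x : EuclideanSpace ℝ (Fin m)}
    (hx : x ∈ Submodule.span ℝ (b '' s)) : μ0 * ⟪x, x⟫ ≤ ⟪x, T x⟫ := by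
  have := rayleigh_le b (-T) (-μ) (fun i => by simp [hT i]) (s := s) (μ0 := -μ0)
    (fun i hi => neg_le_neg (hs i hi)) hx
  simp only [LinearMap.neg_apply, inner_neg_right, Pi.neg_apply] at this
  linarith

lemma finrank_span_image (b : OrthonormalBasis (Fin m) ℝ (EuclideanSpace ℝ (Fin m)))
    (s : Finset (Fin m)) :
    Module.finrank ℝ (Submodule.span ℝ (b '' ↑s)) = s.card := by
  classical
  rw [← Finset.coe_image,
    finrank_span_finset_eq_card
      (((linearIndepOn_id_range_iff b.orthonormal.linearIndependent.injective).mpr b.orthonormal.linearIndependent).mono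
        (fun y hy => by obtain ⟨j, _, rfl⟩ := Finset.mem_image.mp hy; exact ⟨j, rfl⟩)),
    Finset.card_image_of_injective s b.orthonormal.linearIndependent.injective]

end Helper

open Matrix Module Submodule
open scoped RealInnerProductSpace

section Helper2

variable {m : ℕ}

lemma eigDesc_eq {A : Matrix (Fin m) (Fin m) ℝ} (hA : A.IsHermitian) (k : Fin m) :
    eigDesc A k = hA.eigenvalues (Tuple.sort hA.eigenvalues k.rev) := by
  rw [eigDesc, dif_pos hA]

lemma toEuclideanLin_eigenvectorBasis {A : Matrix (Fin m) (Fin m) ℝ} (hA : A.IsHermitian)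
    (i : Fin m) :
    Matrix.toEuclideanLin A (hA.eigenvectorBasis i)
      = hA.eigenvalues i • hA.eigenvectorBasis i := by
  exact congrArg (WithLp.equiv 2 (Fin m → ℝ)).symm (hA.mulVec_eigenvectorBasis i)

lemma toEuclideanLin_mul_apply {X Y : Matrix (Fin m) (Fin m) ℝ} (v : EuclideanSpace ℝ (Fin m)) :
    Matrix.toEuclideanLin (X * Y) v = Matrix.toEuclideanLin X (Matrix.toEuclideanLin Y v) := by
  simp only [Matrix.toEuclideanLin_apply, Equiv.apply_symm_apply, Matrix.mulVec_mulVec]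

lemma quad_bridge (C : Matrix (Fin m) (Fin m) ℝ) (x : EuclideanSpace ℝ (Fin m)) :
    ⟪x, Matrix.toEuclideanLin C x⟫
      = star (WithLp.equiv 2 (Fin m → ℝ) x) ⬝ᵥ C *ᵥ (WithLp.equiv 2 (Fin m → ℝ) x) := by
  rw [EuclideanSpace.inner_eq_star_dotProduct, dotProduct_comm]
  rfl

lemma inner_self_pos' {F : Type*} [NormedAddCommGroup F] [InnerProductSpace ℝ F]
    {x : F} (hx : x ≠ 0) : (0 : ℝ) < ⟪x, x⟫ := by
  rw [real_inner_self_eq_norm_sq]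
  exact pow_pos (norm_pos_iff.mpr hx) 2

end Helper2

section Weyl

variable {m : ℕ}

lemma exists_lower_space {A : Matrix (Fin m) (Fin m) ℝ} (hA : A.IsHermitian) (k : Fin m) :
    ∃ S : Submodule ℝ (EuclideanSpace ℝ (Fin m)),
      Module.finrank ℝ S = (k : ℕ) + 1 ∧
      ∀ x ∈ S, eigDesc A k * ⟪x, x⟫ ≤ ⟪x, Matrix.toEuclideanLin A x⟫ := by
  classical
  set σ := Tuple.sort hA.eigenvalues with hσ
  refine ⟨Submodule.span ℝ (hA.eigenvectorBasis ''
      ↑((Finset.Iic k).image (fun j => σ j.rev))), ?_, ?_⟩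
  · rw [finrank_span_image,
      Finset.card_image_of_injective _
        (show Function.Injective (fun j : Fin m => σ j.rev) from
          fun a b h => Fin.rev_injective (σ.injective h)), Fin.card_Iic]
  · intro x hx
    refine rayleigh_ge hA.eigenvectorBasis _ hA.eigenvalues
      (toEuclideanLin_eigenvectorBasis hA) ?_ hx
    intro i hi
    simp only [Finset.coe_image, Set.mem_image, Finset.mem_coe, Finset.mem_Iic] at hi
    obtain ⟨j, hj, rfl⟩ := hi
    rw [eigDesc_eq hA]
    exact Tuple.monotone_sort hA.eigenvalues (Fin.rev_le_rev.mpr hj)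

lemma exists_upper_space {A : Matrix (Fin m) (Fin m) ℝ} (hA : A.IsHermitian) (k : Fin m) :
    ∃ S : Submodule ℝ (EuclideanSpace ℝ (Fin m)),
      Module.finrank ℝ S = m - (k : ℕ) ∧
      ∀ x ∈ S, ⟪x, Matrix.toEuclideanLin A x⟫ ≤ eigDesc A k * ⟪x, x⟫ := by
  classical
  set σ := Tuple.sort hA.eigenvalues with hσ
  refine ⟨Submodule.span ℝ (hA.eigenvectorBasis ''
      ↑((Finset.Ici k).image (fun j => σ j.rev))), ?_, ?_⟩
  · rw [finrank_span_image,
      Finset.card_image_of_injective _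
        (show Function.Injective (fun j : Fin m => σ j.rev) from
          fun a b h => Fin.rev_injective (σ.injective h)), Fin.card_Ici]
  · intro x hx
    refine rayleigh_le hA.eigenvectorBasis _ hA.eigenvalues
      (toEuclideanLin_eigenvectorBasis hA) ?_ hx
    intro i hi
    simp only [Finset.coe_image, Set.mem_image, Finset.mem_coe, Finset.mem_Ici] at hi
    obtain ⟨j, hj, rfl⟩ := hi
    rw [eigDesc_eq hA]
    exact Tuple.monotone_sort hA.eigenvalues (Fin.rev_le_rev.mpr hj)

lemma eigDesc_lt_of_posDef {A B : Matrix (Fin m) (Fin m) ℝ}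
    (hA : A.IsHermitian) (hB : B.IsHermitian) (hd : (B - A).PosDef) (k : Fin m) :
    eigDesc A k < eigDesc B k := by
  obtain ⟨S, hSr, hSb⟩ := exists_lower_space hA k
  obtain ⟨T, hTr, hTb⟩ := exists_upper_space hB k
  have hfin : 0 < Module.finrank ℝ ↥(S ⊓ T) := by
    have h1 := Submodule.finrank_sup_add_finrank_inf_eq S T
    have h2 : Module.finrank ℝ ↥(S ⊔ T) ≤ m := by
      have := Submodule.finrank_le (S ⊔ T)
      rwa [finrank_euclideanSpace_fin] at this
    have hk : (k : ℕ) < m := k.isLt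
    omega
  obtain ⟨⟨x, hxST⟩, hx0⟩ := Module.finrank_pos_iff_exists_ne_zero.mp hfin
  have hx : x ≠ 0 := by simpa [Submodule.mk_eq_zero] using hx0
  have hq : ⟪x, Matrix.toEuclideanLin A x⟫ < ⟪x, Matrix.toEuclideanLin B x⟫ := by
    have hxe : WithLp.equiv 2 (Fin m → ℝ) x ≠ 0 := by
      simpa using (WithLp.equiv 2 (Fin m → ℝ)).injective.ne_iff.mpr hx
    have h := hd.dotProduct_mulVec_pos hxe
    rw [← quad_bridge] at h
    have hsub : Matrix.toEuclideanLin (B - A) x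
        = Matrix.toEuclideanLin B x - Matrix.toEuclideanLin A x := by
      rw [map_sub]; rfl
    rw [hsub, inner_sub_right] at h
    linarith
  have hxx : 0 < ⟪x, x⟫ := inner_self_pos' hx
  have c1 := hSb x hxST.1
  have c2 := hTb x hxST.2
  exact lt_of_mul_lt_mul_right (by linarith) hxx.le

lemma posDef_of_basis {C : Matrix (Fin m) (Fin m) ℝ} (hC : C.IsHermitian)
    (b : OrthonormalBasis (Fin m) ℝ (EuclideanSpace ℝ (Fin m))) (μ : Fin m → ℝ)
    (hT : ∀ i, Matrix.toEuclideanLin C (b i) = μ i • b i) (hpos : ∀ i, 0 < μ i) :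
    C.PosDef := by
  refine Matrix.PosDef.of_dotProduct_mulVec_pos hC fun x hx => ?_
  set x' : EuclideanSpace ℝ (Fin m) := (WithLp.equiv 2 (Fin m → ℝ)).symm x with hx'
  have hx'0 : x' ≠ 0 := by
    simpa [hx'] using (WithLp.equiv 2 (Fin m → ℝ)).symm.injective.ne_iff.mpr hx
  have hb : star x ⬝ᵥ C *ᵥ x = ⟪x', Matrix.toEuclideanLin C x'⟫ := by
    rw [quad_bridge]; rfl
  rw [hb, inner_map_eq_sum b _ μ hT]
  have hpp : 0 < ⟪x', x'⟫ := inner_self_pos' hx'0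
  have hex : ∃ i, ⟪b i, x'⟫ ≠ 0 := by
    by_contra h
    push_neg at h
    rw [inner_self_eq_sum b] at hpp
    simp [h] at hpp
  obtain ⟨i, hi⟩ := hex
  refine Finset.sum_pos' (fun j _ => mul_nonneg (hpos j).le (sq_nonneg _))
    ⟨i, Finset.mem_univ i, mul_pos (hpos i) (by positivity)⟩

end Weyl

section Main

lemma herm_conj {n m : ℕ} {Q : Matrix (Fin n) (Fin n) ℝ} (hQ : Q.IsHermitian)
    (U : Matrix (Fin n) (Fin m) ℝ) : (Uᵀ * Q * U).IsHermitian := by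
  rw [← conjTranspose_eq_transpose_of_trivial U]
  exact isHermitian_conjTranspose_mul_mul U hQ

lemma posdef_conj {n m : ℕ} {Q : Matrix (Fin n) (Fin n) ℝ} (hQ : Q.PosDef)
    {U : Matrix (Fin n) (Fin m) ℝ} (hU : Uᵀ * U = 1) : (Uᵀ * Q * U).PosDef := by
  refine Matrix.PosDef.of_dotProduct_mulVec_pos (herm_conj hQ.1 U) fun x hx => ?_
  have hUx : U *ᵥ x ≠ 0 := by
    intro h
    apply hx
    have := congrArg (fun v => Uᵀ *ᵥ v) h
    simpa [Matrix.mulVec_mulVec, hU] using this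
  have h := hQ.dotProduct_mulVec_pos hUx
  have heq : star x ⬝ᵥ (Uᵀ * Q * U) *ᵥ x = star (U *ᵥ x) ⬝ᵥ Q *ᵥ (U *ᵥ x) := by
    rw [← Matrix.mulVec_mulVec, ← Matrix.mulVec_mulVec, star_trivial, star_trivial,
      Matrix.dotProduct_mulVec x Uᵀ, Matrix.vecMul_transpose]
  rwa [heq]

lemma posdef_smul {n : ℕ} {Q : Matrix (Fin n) (Fin n) ℝ} (hQ : Q.PosDef)
    {c : ℝ} (hc : 0 < c) : (c • Q).PosDef := by
  refine Matrix.PosDef.of_dotProduct_mulVec_pos ?_ fun x hx => ?_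
  · show (c • Q)ᴴ = c • Q
    rw [conjTranspose_smul, star_trivial, hQ.1.eq]
  · rw [Matrix.smul_mulVec, dotProduct_smul]
    exact mul_pos hc (hQ.dotProduct_mulVec_pos hx)

lemma eig_le_eigDesc_zero {n : ℕ} {A : Matrix (Fin n) (Fin n) ℝ} (hA : A.IsHermitian)
    (h0 : 0 < n) (i : Fin n) : hA.eigenvalues i ≤ eigDesc A ⟨0, h0⟩ := by
  rw [eigDesc_eq hA]
  have h1 : hA.eigenvalues i
      = (hA.eigenvalues ∘ Tuple.sort hA.eigenvalues) ((Tuple.sort hA.eigenvalues).symm i) := by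
    simp
  rw [h1]
  refine Tuple.monotone_sort hA.eigenvalues ?_
  have := ((Tuple.sort hA.eigenvalues).symm i).isLt
  have h00 : ((⟨0, h0⟩ : Fin n) : ℕ) = 0 := rfl
  rw [Fin.le_def, Fin.val_rev, h00]
  omega

theorem stmt19 (N M : ℕ) (hM : 1 ≤ M) (hMN : M ≤ N)
    (H : Matrix (Fin N) (Fin N) ℝ) (hH : H.IsHermitian)
    (U : Matrix (Fin N) (Fin M) ℝ) (hU : Uᵀ * U = 1)
    (z z' : ℝ) (h1 : eigDesc H ⟨0, by omega⟩ < z') (h2 : z' < z) :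
    (Uᵀ * ((z' • (1 : Matrix (Fin N) (Fin N) ℝ) - H)⁻¹
          - (z • (1 : Matrix (Fin N) (Fin N) ℝ) - H)⁻¹) * U
        = (z - z') • (Uᵀ * (z' • (1 : Matrix (Fin N) (Fin N) ℝ) - H)⁻¹
            * (z • (1 : Matrix (Fin N) (Fin N) ℝ) - H)⁻¹ * U)) ∧
    (Uᵀ * ((z' • (1 : Matrix (Fin N) (Fin N) ℝ) - H)⁻¹
        - (z • (1 : Matrix (Fin N) (Fin N) ℝ) - H)⁻¹) * U).PosDef ∧
    ∀ d : Fin M → ℝ, (∀ j, d j ≠ 0) →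
      ∀ k : Fin M,
        eigDesc ((Matrix.diagonal d)⁻¹
              - Uᵀ * (z' • (1 : Matrix (Fin N) (Fin N) ℝ) - H)⁻¹ * U) k
          < eigDesc ((Matrix.diagonal d)⁻¹
              - Uᵀ * (z • (1 : Matrix (Fin N) (Fin N) ℝ) - H)⁻¹ * U) k := by
  have hNpos : 0 < N := by omega
  set A : Matrix (Fin N) (Fin N) ℝ := z • (1 : Matrix (Fin N) (Fin N) ℝ) - H with hA_def
  set A' : Matrix (Fin N) (Fin N) ℝ := z' • (1 : Matrix (Fin N) (Fin N) ℝ) - H with hA'_def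
  have hev : ∀ i, hH.eigenvalues i < z' :=
    fun i => lt_of_le_of_lt (eig_le_eigDesc_zero hH hNpos i) h1
  -- Hermitian facts
  have hAh : A.IsHermitian := by
    rw [hA_def]
    refine Matrix.IsHermitian.sub ?_ hH
    show (z • (1 : Matrix (Fin N) (Fin N) ℝ))ᴴ = z • 1
    rw [conjTranspose_smul, star_trivial, conjTranspose_one]
  have hA'h : A'.IsHermitian := by
    rw [hA'_def]
    refine Matrix.IsHermitian.sub ?_ hH
    show (z' • (1 : Matrix (Fin N) (Fin N) ℝ))ᴴ = z' • 1
    rw [conjTranspose_smul, star_trivial, conjTranspose_one]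
  -- action on eigenbasis
  set b := hH.eigenvectorBasis with hb_def
  have hT1 : ∀ v : EuclideanSpace ℝ (Fin N), Matrix.toEuclideanLin (1 : Matrix (Fin N) (Fin N) ℝ) v = v := by
    intro v
    rw [Matrix.toEuclideanLin_apply, Matrix.one_mulVec, WithLp.toLp_ofLp]
  have hTA : ∀ i, Matrix.toEuclideanLin A (b i) = (z - hH.eigenvalues i) • b i := by
    intro i
    rw [hA_def, map_sub, LinearMap.sub_apply, _root_.map_smul, LinearMap.smul_apply, hT1,
      toEuclideanLin_eigenvectorBasis hH, sub_smul]
  have hTA' : ∀ i, Matrix.toEuclideanLin A' (b i) = (z' - hH.eigenvalues i) • b i := by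
    intro i
    rw [hA'_def, map_sub, LinearMap.sub_apply, _root_.map_smul, LinearMap.smul_apply, hT1,
      toEuclideanLin_eigenvectorBasis hH, sub_smul]
  -- positive definiteness
  have hApd : A.PosDef := posDef_of_basis hAh b _ hTA (fun i => by have := hev i; linarith)
  have hA'pd : A'.PosDef := posDef_of_basis hA'h b _ hTA' (fun i => by have := hev i; linarith)
  have hPh : (A * A').IsHermitian := by
    have hcomm : A * A' = A' * A := by
      have hz : z • (1 : Matrix (Fin N) (Fin N) ℝ) = algebraMap ℝ _ z :=
        (Algebra.algebraMap_eq_smul_one z).symm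
      have hz' : z' • (1 : Matrix (Fin N) (Fin N) ℝ) = algebraMap ℝ _ z' :=
        (Algebra.algebraMap_eq_smul_one z').symm
      have cXH : Commute (algebraMap ℝ (Matrix (Fin N) (Fin N) ℝ) z) H := Algebra.commutes z H
      have cYH : Commute (algebraMap ℝ (Matrix (Fin N) (Fin N) ℝ) z') H := Algebra.commutes z' H
      have cXY : Commute (algebraMap ℝ (Matrix (Fin N) (Fin N) ℝ) z)
          (algebraMap ℝ (Matrix (Fin N) (Fin N) ℝ) z') := Algebra.commutes z _
      have : Commute A A' := by
        rw [hA_def, hA'_def, hz, hz']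
        exact Commute.sub_right (Commute.sub_left cXY cYH.symm)
          (Commute.sub_left cXH (Commute.refl H))
      exact this
    show (A * A')ᴴ = A * A'
    rw [conjTranspose_mul, hAh.eq, hA'h.eq, hcomm]
  have hTP : ∀ i, Matrix.toEuclideanLin (A * A') (b i)
      = ((z' - hH.eigenvalues i) * (z - hH.eigenvalues i)) • b i := by
    intro i
    rw [toEuclideanLin_mul_apply, hTA' i, _root_.map_smul, hTA i, smul_smul, mul_comm]
  have hPpd : (A * A').PosDef := posDef_of_basis hPh b _ hTP
    (fun i => mul_pos (by have := hev i; linarith) (by have := hev i; linarith))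
  -- invertibility
  have hAdet : IsUnit A.det := (Matrix.isUnit_iff_isUnit_det A).mp hApd.isUnit
  have hA'det : IsUnit A'.det := (Matrix.isUnit_iff_isUnit_det A').mp hA'pd.isUnit
  -- resolvent identity
  have hsub : A - A' = (z - z') • (1 : Matrix (Fin N) (Fin N) ℝ) := by
    rw [hA_def, hA'_def, sub_smul]
    abel
  have key : A'⁻¹ - A⁻¹ = (z - z') • (A'⁻¹ * A⁻¹) := by
    calc A'⁻¹ - A⁻¹ = A'⁻¹ * (A * A⁻¹) - (A'⁻¹ * A') * A⁻¹ := by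
          rw [Matrix.mul_nonsing_inv _ hAdet, Matrix.nonsing_inv_mul _ hA'det, mul_one, one_mul]
      _ = A'⁻¹ * (A - A') * A⁻¹ := by noncomm_ring
      _ = (z - z') • (A'⁻¹ * A⁻¹) := by
          rw [hsub]
          simp [Matrix.mul_smul, Matrix.smul_mul]
  have part1 : Uᵀ * (A'⁻¹ - A⁻¹) * U = (z - z') • (Uᵀ * A'⁻¹ * A⁻¹ * U) := by
    rw [key]
    simp [Matrix.mul_smul, Matrix.smul_mul, Matrix.mul_assoc]
  have part2 : (Uᵀ * (A'⁻¹ - A⁻¹) * U).PosDef := by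
    rw [key, ← Matrix.mul_inv_rev]
    exact posdef_conj (posdef_smul hPpd.inv (by linarith)) hU
  refine ⟨part1, part2, ?_⟩
  intro d hd k
  have hRh : A⁻¹.IsHermitian := hAh.inv
  have hR'h : A'⁻¹.IsHermitian := hA'h.inv
  have hDh : ((Matrix.diagonal d)⁻¹ - Uᵀ * A⁻¹ * U).IsHermitian :=
    ((Matrix.isHermitian_diagonal d).inv).sub (herm_conj hRh U)
  have hD'h : ((Matrix.diagonal d)⁻¹ - Uᵀ * A'⁻¹ * U).IsHermitian :=
    ((Matrix.isHermitian_diagonal d).inv).sub (herm_conj hR'h U)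
  have hdiff : ((Matrix.diagonal d)⁻¹ - Uᵀ * A⁻¹ * U)
      - ((Matrix.diagonal d)⁻¹ - Uᵀ * A'⁻¹ * U) = Uᵀ * (A'⁻¹ - A⁻¹) * U := by
    rw [Matrix.mul_sub, Matrix.sub_mul]
    abel
  exact eigDesc_lt_of_posDef hD'h hDh (hdiff ▸ part2) k

end Main
end
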